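/- Let (A, H) be a matched pair of quasigroupoids. Then the double cross product A ⋈ H, with objects (A⋈H)₀ = A₀, arrows (A⋈H)₁ = {(a,h) : s_A(a) = t_H(h)}, source s(a,h) = s_H(h), target t(a,h) = t_A(a), identity id(x) = (id_A(x), id_H(x)), product (a,g)·(b,h) = (a•φ_A(g,b), φ_H(g,b)⋆h) when s_H(g) = t_A(b), and inverse λ(a,h) = (φ_A(λ_H(h),λ_A(a)), φ_H(λ_H(h),λ_A(a))), is a quasigroupoid. -/
import Mathlib


/-- A quasigroupoid: objects `O`, arrows `A`, with a partial product `mul`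
(meaningful on composable pairs, i.e. when `s a = t b`) and inverse map `inv`.
All axioms involving the product are guarded by composability hypotheses. -/
structure Quasigroupoid (O : Type*) (A : Type*) where
  s : A → O
  t : A → O
  e : O → A
  inv : A → A
  mul : A → A → A
  s_e : ∀ x, s (e x) = x
  t_e : ∀ x, t (e x) = x
  e_mul : ∀ a, mul (e (t a)) a = a
  mul_e : ∀ a, mul a (e (s a)) = a
  s_mul : ∀ a b, s a = t b → s (mul a b) = s b
  t_mul : ∀ a b, s a = t b → t (mul a b) = t a
  inv_comp_left : ∀ a b, s a = t b → s (inv a) = t (mul a b)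
  inv_mul_cancel : ∀ a b, s a = t b → mul (inv a) (mul a b) = b
  comp_inv_right : ∀ a b, s a = t b → s (mul a b) = t (inv b)
  mul_inv_cancel : ∀ a b, s a = t b → mul (mul a b) (inv b) = a

/-- A matched pair of quasigroupoids with common base `O`:
a left action `φA` of `H` on `A` and a right action `φH` of `A` on `H`
satisfying the module conditions and the matched pair compatibilities. -/
structure IsMatchedPair {O A1 H1 : Type*} (A : Quasigroupoid O A1) (H : Quasigroupoid O H1)
    (φA : H1 → A1 → A1) (φH : H1 → A1 → H1) : Prop where
  t_act : ∀ h a, H.s h = A.t a → A.t (φA h a) = H.t h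
  act_mul : ∀ g h a, H.s g = H.t h → H.s h = A.t a → φA (H.mul g h) a = φA g (φA h a)
  act_id : ∀ a, φA (H.e (A.t a)) a = a
  s_act : ∀ h a, H.s h = A.t a → H.s (φH h a) = A.s a
  actH_mul : ∀ h a b, H.s h = A.t a → A.s a = A.t b → φH h (A.mul a b) = φH (φH h a) b
  actH_id : ∀ h, φH h (A.e (H.s h)) = h
  compat_st : ∀ h a, H.s h = A.t a → A.s (φA h a) = H.t (φH h a)
  compat_mulA : ∀ h a b, H.s h = A.t a → A.s a = A.t b →
    φA h (A.mul a b) = A.mul (φA h a) (φA (φH h a) b)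
  compat_mulH : ∀ g h a, H.s g = H.t h → H.s h = A.t a →
    φH (H.mul g h) a = H.mul (φH g (φA h a)) (φH h a)


namespace Quasigroupoid
variable {O A1 : Type*} (Q : Quasigroupoid O A1)

theorem s_inv' (a : A1) : Q.s (Q.inv a) = Q.t a := by
  have h := Q.inv_comp_left a (Q.e (Q.s a)) (Q.t_e _).symm
  rwa [Q.mul_e] at h

theorem t_inv' (a : A1) : Q.t (Q.inv a) = Q.s a := by
  have h := Q.comp_inv_right (Q.e (Q.t a)) a (Q.s_e _)
  rw [Q.e_mul] at h
  exact h.symm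

theorem inv_mul_self (a : A1) : Q.mul (Q.inv a) a = Q.e (Q.s a) := by
  have h := Q.inv_mul_cancel a (Q.e (Q.s a)) (Q.t_e _).symm
  rwa [Q.mul_e] at h

theorem mul_inv_self (a : A1) : Q.mul a (Q.inv a) = Q.e (Q.t a) := by
  have h := Q.mul_inv_cancel (Q.e (Q.t a)) a (Q.s_e _)
  rwa [Q.e_mul] at h

theorem eq_inv_of_mul_eq (u w : A1) (hc : Q.s u = Q.t w)
    (h : Q.mul u w = Q.e (Q.t u)) : w = Q.inv u := by
  have h1 := Q.inv_mul_cancel u w hc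
  rw [h, ← Q.s_inv' u, Q.mul_e] at h1
  exact h1.symm

theorem eq_inv_of_mul_eq' (u w : A1) (hc : Q.s u = Q.t w)
    (h : Q.mul u w = Q.e (Q.s w)) : u = Q.inv w := by
  have h1 := Q.mul_inv_cancel u w hc
  rw [h, ← Q.t_inv' w, Q.e_mul] at h1
  exact h1.symm

theorem eq_e_of_idem (u : A1) (hc : Q.s u = Q.t u) (h : Q.mul u u = u) :
    u = Q.e (Q.s u) := by
  have h1 := Q.inv_mul_cancel u u hc
  rw [h, Q.inv_mul_self] at h1
  exact h1.symm

end Quasigroupoid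

section MP
variable {O A1 H1 : Type*} {A : Quasigroupoid O A1} {H : Quasigroupoid O H1}
  {φA : H1 → A1 → A1} {φH : H1 → A1 → H1} (hmp : IsMatchedPair A H φA φH)

include hmp

theorem IsMatchedPair.phiH_e (a : A1) : φH (H.e (A.t a)) a = H.e (A.s a) := by
  set u := φH (H.e (A.t a)) a with hu
  have hse : H.s (H.e (A.t a)) = A.t a := H.s_e _
  have hs : H.s u = A.s a := hmp.s_act _ _ hse
  have ht : A.s a = H.t u := by
    have h := hmp.compat_st (H.e (A.t a)) a hse
    rwa [hmp.act_id] at h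
  have hmm := hmp.compat_mulH (H.e (A.t a)) (H.e (A.t a)) a
    (by rw [H.s_e, H.t_e]) hse
  rw [hmp.act_id] at hmm
  have he : H.mul (H.e (A.t a)) (H.e (A.t a)) = H.e (A.t a) := by
    have h := H.e_mul (H.e (A.t a)); rwa [H.t_e] at h
  rw [he] at hmm
  have := H.eq_e_of_idem u (hs.trans ht) hmm.symm
  rwa [hs] at this

theorem IsMatchedPair.phiA_e (h : H1) : φA h (A.e (H.s h)) = A.e (H.t h) := by
  set v := φA h (A.e (H.s h)) with hv
  have hte : H.s h = A.t (A.e (H.s h)) := (A.t_e _).symm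
  have ht : A.t v = H.t h := hmp.t_act _ _ hte
  have hs : A.s v = H.t h := by
    have h2 := hmp.compat_st h (A.e (H.s h)) hte
    rwa [hmp.actH_id] at h2
  have hmm := hmp.compat_mulA h (A.e (H.s h)) (A.e (H.s h)) hte
    (by rw [A.s_e, A.t_e])
  rw [hmp.actH_id] at hmm
  have he : A.mul (A.e (H.s h)) (A.e (H.s h)) = A.e (H.s h) := by
    have h2 := A.e_mul (A.e (H.s h)); rwa [A.t_e] at h2
  rw [he] at hmm
  have := A.eq_e_of_idem v (hs.trans ht.symm) hmm.symm
  rwa [hs] at this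

end MP

/-- The double cross product `A ⋈ H` of a matched pair of quasigroupoids is a
quasigroupoid: objects `O`, arrows the pairs `(a,h)` with `s_A a = t_H h`,
source `(a,h) ↦ s_H h`, target `(a,h) ↦ t_A a`, identities `x ↦ (id_A x, id_H x)`,
product `(a,g)·(b,h) = (a • φA(g,b), φH(g,b) ⋆ h)` on composable pairs, and
inverse `(a,h) ↦ (φA(λ_H h, λ_A a), φH(λ_H h, λ_A a))`. -/
theorem doubleCrossProduct_quasigroupoid {O A1 H1 : Type*}
    (A : Quasigroupoid O A1) (H : Quasigroupoid O H1)
    (φA : H1 → A1 → A1) (φH : H1 → A1 → H1)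
    (hmp : IsMatchedPair A H φA φH) :
    ∃ D : Quasigroupoid O {p : A1 × H1 // A.s p.1 = H.t p.2},
      (∀ p, D.s p = H.s p.val.2) ∧
      (∀ p, D.t p = A.t p.val.1) ∧
      (∀ x, (D.e x).val = (A.e x, H.e x)) ∧
      (∀ p, (D.inv p).val =
        (φA (H.inv p.val.2) (A.inv p.val.1), φH (H.inv p.val.2) (A.inv p.val.1))) ∧
      (∀ p q, H.s p.val.2 = A.t q.val.1 →
        (D.mul p q).val =
          (A.mul p.val.1 (φA p.val.2 q.val.1), H.mul (φH p.val.2 q.val.1) q.val.2)) := by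
  classical
  -- well-definedness of the product
  have wd : ∀ p q : {p : A1 × H1 // A.s p.1 = H.t p.2}, H.s p.val.2 = A.t q.val.1 →
      A.s (A.mul p.val.1 (φA p.val.2 q.val.1)) =
        H.t (H.mul (φH p.val.2 q.val.1) q.val.2) := by
    rintro ⟨⟨a, g⟩, hp⟩ ⟨⟨b, h⟩, hq⟩ hc
    dsimp only at *
    have h2 : A.s a = A.t (φA g b) := hp.trans (hmp.t_act g b hc).symm
    calc A.s (A.mul a (φA g b)) = A.s (φA g b) := A.s_mul _ _ h2
      _ = H.t (φH g b) := hmp.compat_st g b hc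
      _ = H.t (H.mul (φH g b) h) :=
          (H.t_mul _ _ ((hmp.s_act g b hc).trans hq)).symm
  have winv : ∀ p : {p : A1 × H1 // A.s p.1 = H.t p.2},
      H.s (H.inv p.val.2) = A.t (A.inv p.val.1) := by
    rintro ⟨⟨a, g⟩, hp⟩
    dsimp only
    rw [H.s_inv', A.t_inv']
    exact hp.symm
  refine ⟨{
    s := fun p => H.s p.val.2
    t := fun p => A.t p.val.1
    e := fun x => ⟨(A.e x, H.e x), by rw [A.s_e, H.t_e]⟩
    inv := fun p => ⟨(φA (H.inv p.val.2) (A.inv p.val.1),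
        φH (H.inv p.val.2) (A.inv p.val.1)), hmp.compat_st _ _ (winv p)⟩
    mul := fun p q => if hc : H.s p.val.2 = A.t q.val.1 then
        ⟨(A.mul p.val.1 (φA p.val.2 q.val.1), H.mul (φH p.val.2 q.val.1) q.val.2),
          wd p q hc⟩ else p
    s_e := fun x => H.s_e x
    t_e := fun x => A.t_e x
    e_mul := ?_
    mul_e := ?_
    s_mul := ?_
    t_mul := ?_
    inv_comp_left := ?_
    inv_mul_cancel := ?_
    comp_inv_right := ?_
    mul_inv_cancel := ?_ }, fun p => rfl, fun p => rfl, fun x => rfl, fun p => rfl,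
    fun p q hc => by simp only [dif_pos hc]⟩
  · -- e_mul
    rintro ⟨⟨a, g⟩, hp⟩
    have hcond : H.s (H.e (A.t a)) = A.t a := H.s_e _
    simp only [dif_pos hcond]
    apply Subtype.ext
    replace hp : A.s a = H.t g := hp
    dsimp only
    rw [hmp.act_id, A.e_mul, hmp.phiH_e, hp, H.e_mul]
  · -- mul_e
    rintro ⟨⟨a, g⟩, hp⟩
    have hcond : H.s g = A.t (A.e (H.s g)) := (A.t_e _).symm
    simp only [dif_pos hcond]
    apply Subtype.ext
    replace hp : A.s a = H.t g := hp
    dsimp only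
    rw [hmp.phiA_e, ← hp, A.mul_e, hmp.actH_id, H.mul_e]
  · -- s_mul
    rintro ⟨⟨a, g⟩, hp⟩ ⟨⟨b, h⟩, hq⟩ hc
    replace hq : A.s b = H.t h := hq
    dsimp only at hc ⊢
    simp only [dif_pos hc]
    exact H.s_mul _ _ ((hmp.s_act g b hc).trans hq)
  · -- t_mul
    rintro ⟨⟨a, g⟩, hp⟩ ⟨⟨b, h⟩, hq⟩ hc
    replace hp : A.s a = H.t g := hp
    dsimp only at hc ⊢
    simp only [dif_pos hc]
    exact A.t_mul _ _ (hp.trans (hmp.t_act g b hc).symm)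
  · -- inv_comp_left
    rintro ⟨⟨a, g⟩, hp⟩ ⟨⟨b, h⟩, hq⟩ hc
    replace hp : A.s a = H.t g := hp
    dsimp only at hc ⊢
    simp only [dif_pos hc]
    rw [hmp.s_act _ _ (winv ⟨⟨a, g⟩, hp⟩), A.s_inv',
      A.t_mul _ _ (hp.trans (hmp.t_act g b hc).symm)]
  · -- inv_mul_cancel
    rintro ⟨⟨a, g⟩, hp⟩ ⟨⟨b, h⟩, hq⟩ hc
    replace hp : A.s a = H.t g := hp
    replace hq : A.s b = H.t h := hq
    dsimp only at hc ⊢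
    have hgb : H.s (H.inv g) = A.t (A.inv a) := winv ⟨⟨a, g⟩, hp⟩
    have h2 : A.s a = A.t (φA g b) := hp.trans (hmp.t_act g b hc).symm
    have hc2 : A.s (A.inv a) = A.t (A.mul a (φA g b)) := by
      rw [A.s_inv', A.t_mul _ _ h2]
    have hcout : H.s (φH (H.inv g) (A.inv a)) = A.t (A.mul a (φA g b)) := by
      rw [hmp.s_act _ _ hgb]; exact hc2
    simp only [dif_pos hc, dif_pos hcout]
    apply Subtype.ext
    dsimp only
    simp only [Prod.mk.injEq]
    have key1 : A.mul (A.inv a) (A.mul a (φA g b)) = φA g b :=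
      A.inv_mul_cancel a (φA g b) h2
    constructor
    · rw [← hmp.compat_mulA _ _ _ hgb hc2, key1,
        ← hmp.act_mul _ _ _ (H.s_inv' g) hc, H.inv_mul_self, hc, hmp.act_id]
    · rw [← hmp.actH_mul _ _ _ hgb hc2, key1]
      have hsY : H.s (φH g b) = H.t h := (hmp.s_act g b hc).trans hq
      have hX : φH (H.inv g) (φA g b) = H.inv (φH g b) := by
        apply H.eq_inv_of_mul_eq'
        · rw [hmp.s_act _ _ (by rw [H.s_inv', hmp.t_act g b hc] :
            H.s (H.inv g) = A.t (φA g b)), hmp.compat_st g b hc]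
        · rw [← hmp.compat_mulH _ _ _ (H.s_inv' g) hc, H.inv_mul_self, hc,
            hmp.phiH_e, hmp.s_act g b hc]
      rw [hX]
      exact H.inv_mul_cancel _ _ hsY
  · -- comp_inv_right
    rintro ⟨⟨a, g⟩, hp⟩ ⟨⟨b, h⟩, hq⟩ hc
    replace hq : A.s b = H.t h := hq
    dsimp only at hc ⊢
    simp only [dif_pos hc]
    rw [H.s_mul _ _ ((hmp.s_act g b hc).trans hq),
      hmp.t_act _ _ (winv ⟨⟨b, h⟩, hq⟩), H.t_inv']
  · -- mul_inv_cancel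
    rintro ⟨⟨a, g⟩, hp⟩ ⟨⟨b, h⟩, hq⟩ hc
    replace hp : A.s a = H.t g := hp
    replace hq : A.s b = H.t h := hq
    dsimp only at hc ⊢
    have hhb : H.s (H.inv h) = A.t (A.inv b) := winv ⟨⟨b, h⟩, hq⟩
    have hs_gb : H.s (φH g b) = H.t h := (hmp.s_act g b hc).trans hq
    have hhx : H.s h = A.t (φA (H.inv h) (A.inv b)) := by
      rw [hmp.t_act _ _ hhb, H.t_inv']
    have hcout : H.s (H.mul (φH g b) h) = A.t (φA (H.inv h) (A.inv b)) := by
      rw [H.s_mul _ _ hs_gb]; exact hhx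
    simp only [dif_pos hc, dif_pos hcout]
    apply Subtype.ext
    dsimp only
    simp only [Prod.mk.injEq]
    set x := φA (H.inv h) (A.inv b) with hxdef
    have stepA : φA h x = A.inv b := by
      rw [hxdef, ← hmp.act_mul _ _ _ (H.t_inv' h).symm hhb, H.mul_inv_self]
      have : H.t h = A.t (A.inv b) := by rw [A.t_inv']; exact hq.symm
      rw [this, hmp.act_id]
    have stepB : φA (H.mul (φH g b) h) x = φA (φH g b) (A.inv b) := by
      rw [hmp.act_mul _ _ _ hs_gb hhx, stepA]
    have hsb : A.s b = A.t (A.inv b) := (A.t_inv' b).symm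
    have stepC : φA (φH g b) (A.inv b) = A.inv (φA g b) := by
      apply A.eq_inv_of_mul_eq
      · rw [hmp.compat_st g b hc, hmp.t_act _ _ ((hmp.s_act g b hc).trans hsb)]
      · rw [← hmp.compat_mulA g b (A.inv b) hc hsb, A.mul_inv_self,
          hmp.t_act g b hc]
        have : A.t b = H.s g := hc.symm
        rw [this, hmp.phiA_e]
    have h2 : A.s a = A.t (φA g b) := hp.trans (hmp.t_act g b hc).symm
    constructor
    · rw [stepB, stepC]
      exact A.mul_inv_cancel a (φA g b) h2
    · -- second component
      have stepD : φH (H.mul (φH g b) h) x =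
          H.mul (φH (φH g b) (A.inv b)) (φH h x) := by
        rw [hmp.compat_mulH _ _ _ hs_gb hhx, stepA]
      have hNP : H.mul (φH h x) (φH (H.inv h) (A.inv b)) = H.e (A.t b) := by
        have h3 := hmp.compat_mulH h (H.inv h) (A.inv b) (H.t_inv' h).symm hhb
        rw [H.mul_inv_self] at h3
        have h4 : H.t h = A.t (A.inv b) := by rw [A.t_inv']; exact hq.symm
        rw [h4, hmp.phiH_e, A.s_inv'] at h3
        exact h3.symm
      have htN : H.t (φH h x) = A.t b := by
        have h3 := hmp.compat_st h x hhx
        rw [stepA, A.s_inv'] at h3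
        exact h3.symm
      have hsN : H.s (φH h x) = H.t (φH (H.inv h) (A.inv b)) := by
        rw [hmp.s_act h x hhx, ← hmp.compat_st _ _ hhb]
      have stepE : φH (H.inv h) (A.inv b) = H.inv (φH h x) := by
        apply H.eq_inv_of_mul_eq _ _ hsN
        rw [hNP, htN]
      rw [stepD, stepE]
      have hsM : H.s (φH (φH g b) (A.inv b)) = H.t (φH h x) := by
        rw [hmp.s_act _ _ ((hmp.s_act g b hc).trans hsb), A.s_inv', htN]
      rw [H.mul_inv_cancel _ _ hsM]
      rw [← hmp.actH_mul g b (A.inv b) hc hsb, A.mul_inv_self]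
      have : A.t b = H.s g := hc.symm
      rw [this, hmp.actH_id]
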